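/- Let P be a rooted finite poset and Q any finite poset, and K a field. Then the ideal J_{P,Q} is generated by special binomials, i.e. J_{P,Q} equals the ideal of T generated by all binomials ∏_{i=1}^d t_{φ_i} − ∏_{i=1}^d t_{φ′_i} that are special of some type (p, π) with respect to some isotone maps φ₁, …, φ_d. -/

import Mathlib

open MvPolynomial

/-- The `K`-algebra map sending the variable `t_φ` (indexed by an isotone map
`φ : P →o Q`) to the monomial `∏_{p ∈ P} x_{p, φ(p)}`. -/
noncomputable def isotonianMap (K P Q : Type) [Field K] [PartialOrder P] [Fintype P]
    [PartialOrder Q] [Fintype Q] :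
    MvPolynomial (P →o Q) K →ₐ[K] MvPolynomial (P × Q) K :=
  aeval fun φ : P →o Q => ∏ p : P, X (p, φ p)

/-- The defining ideal `J_{P,Q}` of the isotonian algebra `K[P,Q]`. -/
noncomputable def isotonianIdeal (K P Q : Type) [Field K] [PartialOrder P] [Fintype P]
    [PartialOrder Q] [Fintype Q] :
    Ideal (MvPolynomial (P →o Q) K) :=
  RingHom.ker (isotonianMap K P Q)

/-- `f` is a special binomial of some type `(p, π)` with respect to some family of
isotone maps `φ₁, …, φ_d`: here `φ'ᵢ(q) = φ_{π(i)}(q)` for `q ≥ p`, `φ'ᵢ(q) = φᵢ(q)`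
otherwise, and if `p` has a lower neighbor `p'` then `φ_{π(i)}(p) ≥ φᵢ(p')` for all `i`. -/
def IsSpecialBinomial (K P Q : Type) [Field K] [PartialOrder P] [Fintype P]
    [PartialOrder Q] [Fintype Q] (f : MvPolynomial (P →o Q) K) : Prop :=
  ∃ (d : ℕ) (φ φ' : Fin d → P →o Q) (p : P) (π : Equiv.Perm (Fin d)),
    (∀ p' : P, p' ⋖ p → ∀ i, φ i p' ≤ φ (π i) p) ∧
    (∀ i q, p ≤ q → φ' i q = φ (π i) q) ∧
    (∀ i q, ¬ p ≤ q → φ' i q = φ i q) ∧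
    f = (∏ i, X (φ i)) - ∏ i, X (φ' i)

set_option linter.unusedSectionVars false

/-- Two tuples with the same multiset of values differ by a permutation. -/
lemma exists_perm_comp {α : Type*} [Fintype α] {d : ℕ} {f g : Fin d → α}
    (h : (List.ofFn f).Perm (List.ofFn g)) : ∃ σ : Equiv.Perm (Fin d), f ∘ σ = g := by
  classical
  let e := Fintype.equivFin α
  have h' : (List.ofFn (⇑e ∘ f)).Perm (List.ofFn (⇑e ∘ g)) := by
    rw [← List.map_ofFn, ← List.map_ofFn]; exact h.map e
  have hs : (⇑e ∘ f) ∘ ⇑(Tuple.sort (⇑e ∘ f)) = (⇑e ∘ g) ∘ ⇑(Tuple.sort (⇑e ∘ g)) := by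
    apply List.ofFn_injective
    haveI : IsAntisymm (Fin (Fintype.card α)) (· ≤ ·) := ⟨fun _ _ => le_antisymm⟩
    refine (fun h1 h2 h3 => List.Perm.eq_of_sortedLE h2 h3 h1) ?_ ?_ ?_
    · exact (((Tuple.sort (⇑e ∘ f)).ofFn_comp_perm (⇑e ∘ f)).trans h').trans
        ((Tuple.sort (⇑e ∘ g)).ofFn_comp_perm (⇑e ∘ g)).symm
    · exact (Tuple.monotone_sort (⇑e ∘ f)).sortedLE_ofFn
    · exact (Tuple.monotone_sort (⇑e ∘ g)).sortedLE_ofFn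
  refine ⟨(Tuple.sort (⇑e ∘ g)).symm.trans (Tuple.sort (⇑e ∘ f)), ?_⟩
  funext x
  have := congrFun hs ((Tuple.sort (⇑e ∘ g)).symm x)
  simp only [Function.comp_apply, Equiv.apply_symm_apply] at this
  exact e.injective this

section Exponents
open scoped Classical
variable {K P Q : Type} [Field K] [PartialOrder P] [Fintype P] [PartialOrder Q] [Fintype Q]

noncomputable def eexp (φ : P →o Q) : (P × Q) →₀ ℕ := ∑ p : P, Finsupp.single (p, φ p) 1

lemma eexp_apply (φ : P →o Q) (p : P) (q : Q) :
    eexp φ (p, q) = if φ p = q then 1 else 0 := by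
  classical
  rw [eexp, Finsupp.finset_sum_apply]
  rw [Finset.sum_eq_single p]
  · simp [Finsupp.single_apply, Prod.ext_iff]
  · intro p' _ hp'
    simp only [Finsupp.single_apply, Prod.mk.injEq, ite_eq_right_iff, and_imp]
    intro h; exact absurd h hp'
  · simp

noncomputable def EE (a : (P →o Q) →₀ ℕ) : (P × Q) →₀ ℕ := a.sum fun φ n => n • eexp φ

lemma EE_add (a b : (P →o Q) →₀ ℕ) : EE (a + b) = EE a + EE b :=
  Finsupp.sum_add_index' (fun _ => zero_smul _ _) (fun _ b₁ b₂ => add_smul b₁ b₂ _)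

lemma EE_single (φ : P →o Q) (n : ℕ) : EE (Finsupp.single φ n) = n • eexp φ :=
  Finsupp.sum_single_index (zero_smul _ _)

lemma EE_zero : EE (0 : (P →o Q) →₀ ℕ) = 0 := Finsupp.sum_zero_index

lemma prod_X_eq_monomial {σ' β : Type*} (s : Finset β) (f : β → σ') :
    (∏ x ∈ s, (X (f x) : MvPolynomial σ' K)) =
      monomial (∑ x ∈ s, Finsupp.single (f x) 1) 1 := by
  classical
  induction s using Finset.induction_on with
  | empty => simp
  | insert x s hx ih =>
    rw [Finset.prod_insert hx, Finset.sum_insert hx, ih, X, monomial_mul, one_mul]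

lemma isotonianMap_monomial (a : (P →o Q) →₀ ℕ) (c : K) :
    isotonianMap K P Q (monomial a c) = monomial (EE a) c := by
  induction a using Finsupp.induction with
  | zero => simp [EE_zero, monomial_zero', isotonianMap]
  | single_add φ n a hφ hn ih =>
    rw [monomial_single_add, map_mul, map_pow, EE_add, EE_single]
    have hX : isotonianMap K P Q (X φ) = monomial (eexp φ) 1 := by
      rw [isotonianMap, aeval_X, prod_X_eq_monomial, eexp]
    rw [hX, ih, monomial_pow, one_pow, monomial_mul, one_mul]

lemma count_toMultiset (a : (P →o Q) →₀ ℕ) (p : P) (q : Q) :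
    ((a.toMultiset).map (fun φ : P →o Q => φ p)).count q = EE a (p, q) := by
  classical
  induction a using Finsupp.induction with
  | zero => simp [EE_zero]
  | single_add φ n a hφ hn ih =>
    rw [Finsupp.toMultiset_add, Multiset.map_add, Multiset.count_add, ih,
      EE_add, EE_single, Finsupp.add_apply, Finsupp.toMultiset_single,
      Multiset.map_nsmul, Multiset.map_singleton, Multiset.count_nsmul,
      Multiset.count_singleton, Finsupp.smul_apply, eexp_apply, smul_eq_mul]
    congr 2
    by_cases h : φ p = q <;> simp [h, Ne.symm, eq_comm]

lemma prod_X_toMultiset (a : (P →o Q) →₀ ℕ) :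
    ((a.toMultiset).map (X : (P →o Q) → MvPolynomial (P →o Q) K)).prod = monomial a 1 := by
  classical
  induction a using Finsupp.induction with
  | zero => simp
  | single_add φ n a hφ hn ih =>
    rw [Finsupp.toMultiset_add, Multiset.map_add, Multiset.prod_add, ih,
      Finsupp.toMultiset_single, Multiset.map_nsmul, Multiset.map_singleton,
      Multiset.prod_nsmul, Multiset.prod_singleton, monomial_single_add]

end Exponents

section Key
open scoped Classical
variable {K P Q : Type} [Field K] [PartialOrder P] [Fintype P] [PartialOrder Q] [Fintype Q]

lemma key_step (hroot : ∀ a b c : P, a ≤ c → b ≤ c → a ≤ b ∨ b ≤ a) :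
    ∀ (n : ℕ) (S : Finset P), Sᶜ.card = n → (∀ x ∈ S, ∀ y : P, y ≤ x → y ∈ S) →
    ∀ (d : ℕ) (φ ψ : Fin d → P →o Q),
      (∀ i, ∀ q ∈ S, φ i q = ψ i q) →
      (∀ q : P, (List.ofFn fun i => φ i q).Perm (List.ofFn fun i => ψ i q)) →
      ((∏ i, X (φ i) : MvPolynomial (P →o Q) K) - ∏ i, X (ψ i)) ∈
        Ideal.span {f | IsSpecialBinomial K P Q f} := by
  classical
  intro n
  induction n with
  | zero =>
    intro S hS hdc d φ ψ hagree hperm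
    have hSuniv : ∀ q : P, q ∈ S := by
      have h1 : Sᶜ = ∅ := Finset.card_eq_zero.mp hS
      intro q
      by_contra hq
      have : q ∈ Sᶜ := Finset.mem_compl.mpr hq
      rw [h1] at this
      exact absurd this (Finset.notMem_empty q)
    have hφψ : φ = ψ := funext fun i =>
      DFunLike.ext _ _ fun q => hagree i q (hSuniv q)
    rw [hφψ, sub_self]
    exact Ideal.zero_mem _
  | succ n ih =>
    intro S hS hdc d φ ψ hagree hperm
    have hne : Sᶜ.Nonempty := Finset.card_pos.mp (by rw [hS]; omega)
    obtain ⟨p, hpmem, hpmin⟩ := Finset.exists_minimal hne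
    have hpS : p ∉ S := Finset.mem_compl.mp hpmem
    have hltS : ∀ y : P, y < p → y ∈ S := fun y hy => by
      by_contra hyS; exact hy.not_ge (hpmin (Finset.mem_compl.mpr hyS) hy.le)
    obtain ⟨σ, hσ⟩ := exists_perm_comp (hperm p)
    have hσ' : ∀ i, φ (σ i) p = ψ i p := fun i => congrFun hσ i
    have hcov : ∀ p' : P, p' < p → ∀ i, φ i p' ≤ φ (σ i) p := fun p' hp' i => by
      rw [hagree i p' (hltS p' hp'), hσ' i]
      exact (ψ i).monotone hp'.le
    have hmono : ∀ i : Fin d, Monotone fun q => if p ≤ q then φ (σ i) q else φ i q := by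
      intro i q₁ q₂ h12
      dsimp only
      by_cases h1 : p ≤ q₁
      · rw [if_pos h1, if_pos (h1.trans h12)]
        exact (φ (σ i)).monotone h12
      · rw [if_neg h1]
        by_cases h2 : p ≤ q₂
        · rw [if_pos h2]
          have hq1p : q₁ < p := by
            rcases hroot q₁ p q₂ h12 h2 with h | h
            · exact lt_of_le_of_ne h (fun he => h1 (he ▸ le_refl p))
            · exact absurd h h1
          exact le_trans (hcov q₁ hq1p i) ((φ (σ i)).monotone h2)
        · rw [if_neg h2]
          exact (φ i).monotone h12
    set φ' : Fin d → P →o Q := fun i => ⟨fun q => if p ≤ q then φ (σ i) q else φ i q, hmono i⟩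
      with hφ'def
    have hφ'app : ∀ i q, φ' i q = if p ≤ q then φ (σ i) q else φ i q := fun i q => rfl
    have hspec : ((∏ i, X (φ i) : MvPolynomial (P →o Q) K) - ∏ i, X (φ' i)) ∈
        {f | IsSpecialBinomial K P Q f} := by
      refine ⟨d, φ, φ', p, σ, fun p' hp' i => hcov p' hp'.lt i, ?_, ?_, rfl⟩
      · intro i q hq; rw [hφ'app, if_pos hq]
      · intro i q hq; rw [hφ'app, if_neg hq]
    have hS' : ((insert p S)ᶜ).card = n := by
      rw [Finset.compl_insert, Finset.card_erase_of_mem hpmem, hS]; omega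
    have hdc' : ∀ x ∈ insert p S, ∀ y : P, y ≤ x → y ∈ insert p S := by
      intro x hx y hy
      rcases Finset.mem_insert.mp hx with rfl | hxS
      · rcases eq_or_lt_of_le hy with rfl | hlt
        · exact Finset.mem_insert_self _ _
        · exact Finset.mem_insert_of_mem (hltS y hlt)
      · exact Finset.mem_insert_of_mem (hdc x hxS y hy)
    have hagree' : ∀ i, ∀ q ∈ insert p S, φ' i q = ψ i q := by
      intro i q hq
      rcases Finset.mem_insert.mp hq with rfl | hqS
      · rw [hφ'app, if_pos le_rfl, hσ' i]
      · have hnpq : ¬ p ≤ q := fun hpq => hpS (hdc q hqS p hpq)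
        rw [hφ'app, if_neg hnpq]
        exact hagree i q hqS
    have hperm' : ∀ q : P, (List.ofFn fun i => φ' i q).Perm (List.ofFn fun i => ψ i q) := by
      intro q
      by_cases hq : p ≤ q
      · have h1 : (fun i => φ' i q) = (fun j : Fin d => φ j q) ∘ ⇑σ := by
          funext i; rw [hφ'app, if_pos hq]; rfl
        rw [h1]
        exact (σ.ofFn_comp_perm (fun j : Fin d => φ j q)).trans (hperm q)
      · have h1 : (fun i => φ' i q) = fun i => φ i q := by
          funext i; rw [hφ'app, if_neg hq]
        rw [h1]; exact hperm q
    have hmem2 := ih (insert p S) hS' hdc' d φ' ψ hagree' hperm'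
    have hsplit : (∏ i, X (φ i) : MvPolynomial (P →o Q) K) - ∏ i, X (ψ i)
        = ((∏ i, X (φ i)) - ∏ i, X (φ' i)) + ((∏ i, X (φ' i)) - ∏ i, X (ψ i)) := by ring
    rw [hsplit]
    exact Ideal.add_mem _ (Ideal.subset_span hspec) hmem2

end Key


lemma ofFn_get_cast {α : Type*} (l : List α) {n : ℕ} (h : n = l.length) :
    List.ofFn (fun i : Fin n => l.get (Fin.cast h i)) = l := by
  subst h
  simp [List.ofFn_get]

section Ker
open scoped Classical
variable {K P Q : Type} [Field K] [PartialOrder P] [Fintype P] [PartialOrder Q] [Fintype Q]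

lemma ker_le_of_binomials (I : Ideal (MvPolynomial (P →o Q) K))
    (hI : ∀ a b : (P →o Q) →₀ ℕ, EE a = EE b →
      (monomial a 1 : MvPolynomial (P →o Q) K) - monomial b 1 ∈ I) :
    ∀ (n : ℕ) (f : MvPolynomial (P →o Q) K), f.support.card ≤ n →
      isotonianMap K P Q f = 0 → f ∈ I := by
  intro n
  induction n with
  | zero =>
    intro f hf _
    have h0 : f.support = ∅ := Finset.card_eq_zero.mp (le_antisymm hf (Nat.zero_le _))
    rw [support_eq_empty.mp h0]
    exact I.zero_mem
  | succ n ih =>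
    intro f hcard hker
    by_cases hf0 : f = 0
    · rw [hf0]; exact I.zero_mem
    obtain ⟨a, ha⟩ := Finset.nonempty_iff_ne_empty.mpr
      (fun h => hf0 (support_eq_empty.mp h))
    set F := f.support.filter (fun b => EE b = EE a) with hF
    have haF : a ∈ F := Finset.mem_filter.mpr ⟨ha, rfl⟩
    have hsum : ∑ b ∈ F, coeff b f = 0 := by
      have h1 : isotonianMap K P Q f = ∑ b ∈ f.support, monomial (EE b) (coeff b f) := by
        conv_lhs => rw [as_sum f]
        rw [map_sum]
        exact Finset.sum_congr rfl fun b _ => isotonianMap_monomial b (coeff b f)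
      have h2 := congrArg (coeff (EE a)) (h1.symm.trans hker)
      rw [coeff_sum, coeff_zero] at h2
      simp only [coeff_monomial] at h2
      rw [hF, Finset.sum_filter]
      exact h2
    set g := f - ∑ b ∈ F, monomial b (coeff b f) with hg
    have hcoeffg : ∀ c, coeff c g = if c ∈ F then 0 else coeff c f := by
      intro c
      rw [hg, coeff_sub, coeff_sum]
      simp only [coeff_monomial]
      rw [Finset.sum_ite_eq' F c (fun b => coeff b f)]
      by_cases hc : c ∈ F
      · rw [if_pos hc, if_pos hc, sub_self]
      · rw [if_neg hc, if_neg hc, sub_zero]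
    have hsupg : g.support ⊆ f.support \ F := by
      intro c hc
      rw [mem_support_iff, hcoeffg] at hc
      by_cases hcF : c ∈ F
      · rw [if_pos hcF] at hc; exact absurd rfl hc
      · rw [if_neg hcF] at hc
        exact Finset.mem_sdiff.mpr ⟨mem_support_iff.mpr hc, hcF⟩
    have hcardg : g.support.card ≤ n := by
      have h3 : F ⊆ f.support := Finset.filter_subset _ _
      have h4 := Finset.card_le_card hsupg
      rw [Finset.card_sdiff_of_subset h3] at h4
      have hF1 : 1 ≤ F.card := Finset.card_pos.mpr ⟨a, haF⟩
      omega
    have hgker : isotonianMap K P Q g = 0 := by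
      rw [hg, map_sub, hker, zero_sub, neg_eq_zero, map_sum]
      have h5 : ∀ b ∈ F, isotonianMap K P Q (monomial b (coeff b f))
          = monomial (EE a) (coeff b f) := by
        intro b hb
        rw [isotonianMap_monomial, (Finset.mem_filter.mp hb).2]
      rw [Finset.sum_congr rfl h5, ← map_sum (monomial (EE a)) (fun b => coeff b f) F,
        hsum, map_zero]
    have hgI := ih g hcardg hgker
    have hfg : f = g + ∑ b ∈ F, monomial b (coeff b f) := by rw [hg]; ring
    have hsplit : (∑ b ∈ F, monomial b (coeff b f) : MvPolynomial (P →o Q) K)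
        = ∑ b ∈ F, ((monomial b (coeff b f)) - monomial a (coeff b f)) := by
      rw [Finset.sum_sub_distrib, ← map_sum (monomial a) (fun b => coeff b f) F,
        hsum, map_zero, sub_zero]
    rw [hfg, hsplit]
    refine I.add_mem hgI (Ideal.sum_mem I fun b hb => ?_)
    have hEb : EE b = EE a := (Finset.mem_filter.mp hb).2
    have hCb : (monomial b (coeff b f) : MvPolynomial (P →o Q) K) - monomial a (coeff b f)
        = C (coeff b f) * ((monomial b 1) - monomial a 1) := by
      rw [mul_sub, C_mul_monomial, C_mul_monomial, mul_one]
    rw [hCb]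
    exact Ideal.mul_mem_left I _ (hI b a hEb)

end Ker

/-- If `P` is rooted then `J_{P,Q}` is generated by special binomials. -/
theorem statement3 (K P Q : Type) [Field K] [PartialOrder P] [Fintype P]
    [PartialOrder Q] [Fintype Q]
    (hmin : ∃ p₀ : P, ∀ x : P, p₀ ≤ x)
    (hroot : ∀ a b c : P, a ≤ c → b ≤ c → a ≤ b ∨ b ≤ a) :
    isotonianIdeal K P Q = Ideal.span {f | IsSpecialBinomial K P Q f} := by
  classical
  obtain ⟨p₀, hp₀⟩ := hmin
  apply le_antisymm
  · -- the kernel is contained in the span of the special binomials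
    intro f hf
    have hker : isotonianMap K P Q f = 0 := by
      rwa [isotonianIdeal, RingHom.mem_ker] at hf
    refine ker_le_of_binomials _ ?_ f.support.card f le_rfl hker
    intro a b hEE
    set la := a.toMultiset.toList with hla
    set lb := b.toMultiset.toList with hlb
    have hmulti : ∀ p : P, a.toMultiset.map (fun φ : P →o Q => φ p)
        = b.toMultiset.map (fun φ : P →o Q => φ p) := by
      intro p
      rw [Multiset.ext]
      intro q
      rw [count_toMultiset, count_toMultiset, hEE]
    have hlen : la.length = lb.length := by
      rw [hla, hlb, Multiset.length_toList, Multiset.length_toList]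
      have h := congrArg Multiset.card (hmulti p₀)
      rwa [Multiset.card_map, Multiset.card_map] at h
    set d := la.length with hd
    set φ : Fin d → P →o Q := fun i => la.get i with hφ
    set ψ : Fin d → P →o Q := fun i => lb.get (Fin.cast hlen i) with hψ
    -- the two monomials are products of variables
    have hcoea : (↑la : Multiset (P →o Q)) = a.toMultiset := by rw [hla, Multiset.coe_toList]
    have hcoeb : (↑lb : Multiset (P →o Q)) = b.toMultiset := by rw [hlb, Multiset.coe_toList]
    have hprodφ : (∏ i, X (φ i) : MvPolynomial (P →o Q) K) = monomial a 1 := by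
      rw [← prod_X_toMultiset a, ← hcoea, Multiset.map_coe, Multiset.prod_coe,
        ← List.prod_ofFn (f := fun i => (X (φ i) : MvPolynomial (P →o Q) K))]
      congr 1
      rw [hφ]
      rw [show (fun i => (X (la.get i) : MvPolynomial (P →o Q) K))
        = (X : (P →o Q) → MvPolynomial (P →o Q) K) ∘ la.get from rfl,
        ← List.map_ofFn, List.ofFn_get]
    have hgetcast : List.ofFn (fun i : Fin d => lb.get (Fin.cast hlen i)) = lb :=
      ofFn_get_cast lb hlen
    have hprodψ : (∏ i, X (ψ i) : MvPolynomial (P →o Q) K) = monomial b 1 := by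
      rw [← prod_X_toMultiset b, ← hcoeb, Multiset.map_coe, Multiset.prod_coe,
        ← List.prod_ofFn (f := fun i => (X (ψ i) : MvPolynomial (P →o Q) K))]
      congr 1
      rw [hψ]
      rw [show (fun i => (X (lb.get (Fin.cast hlen i)) : MvPolynomial (P →o Q) K))
        = (X : (P →o Q) → MvPolynomial (P →o Q) K) ∘ (fun i : Fin d => lb.get (Fin.cast hlen i))
        from rfl, ← List.map_ofFn, hgetcast]
    -- the permutation hypothesis at each point
    have hperm : ∀ p : P, (List.ofFn fun i => φ i p).Perm (List.ofFn fun i => ψ i p) := by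
      intro p
      have h1 : List.ofFn (fun i => φ i p) = la.map (fun χ : P →o Q => χ p) := by
        rw [hφ]
        rw [show (fun i => (la.get i) p) = (fun χ : P →o Q => χ p) ∘ la.get from rfl,
          ← List.map_ofFn, List.ofFn_get]
      have h2 : List.ofFn (fun i => ψ i p) = lb.map (fun χ : P →o Q => χ p) := by
        rw [hψ]
        rw [show (fun i => (lb.get (Fin.cast hlen i)) p)
          = (fun χ : P →o Q => χ p) ∘ (fun i : Fin d => lb.get (Fin.cast hlen i)) from rfl,
          ← List.map_ofFn, hgetcast]
      rw [h1, h2, ← Multiset.coe_eq_coe, ← Multiset.map_coe, ← Multiset.map_coe,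
        hcoea, hcoeb]
      exact hmulti p
    have hmem := key_step (K := K) (Q := Q) hroot ((∅ : Finset P)ᶜ).card ∅ rfl
      (fun x hx => absurd hx (Finset.notMem_empty x)) d φ ψ
      (fun i q hq => absurd hq (Finset.notMem_empty q)) hperm
    rwa [hprodφ, hprodψ] at hmem
  · -- special binomials lie in the kernel
    rw [Ideal.span_le]
    rintro f ⟨d, φ, φ', p, π, hcov, h1, h2, rfl⟩
    have hmem : ((∏ i, X (φ i) : MvPolynomial (P →o Q) K) - ∏ i, X (φ' i))
        ∈ isotonianIdeal K P Q := by
      rw [isotonianIdeal, RingHom.mem_ker, map_sub, sub_eq_zero]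
      have hΦprod : ∀ (χ : Fin d → P →o Q),
          isotonianMap K P Q (∏ i, X (χ i)) = ∏ q : P, ∏ i, X (q, χ i q) := by
        intro χ
        rw [map_prod]
        simp only [isotonianMap, aeval_X]
        rw [Finset.prod_comm]
      rw [hΦprod, hΦprod]
      apply Finset.prod_congr rfl
      intro q _
      by_cases hq : p ≤ q
      · have hstep : ∀ i, φ' i q = φ (π i) q := fun i => h1 i q hq
        calc (∏ i, X (q, φ i q) : MvPolynomial (P × Q) K)
            = ∏ i, X (q, φ (π i) q) := (Equiv.prod_comp π (fun j => X (q, φ j q))).symm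
          _ = ∏ i, X (q, φ' i q) := Finset.prod_congr rfl fun i _ => by rw [hstep i]
      · exact Finset.prod_congr rfl fun i _ => by rw [h2 i q hq]
    exact hmem
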